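/- Let E = ℂ^r, let q be a positive integer, and let K ⊆ H²(ℂ^d) ⊗ E be the closed span of all monomials z^n ⊗ ζ with n ∈ ℕ^d satisfying n_1 ≤ q and ζ ∈ E. Then the restriction B of S_1^* to K satisfies B^*B ∈ 𝓛^p for every p > d; equivalently, the compression P_K S_1^* S_1 P_K belongs to the Schatten class 𝓛^p for every p > d. -/

import Mathlib

open scoped ENNReal

noncomputable section

set_option synthInstance.maxHeartbeats 400000
set_option maxHeartbeats 1000000

namespace Arveson

/-- The `n`-th approximation number of a bounded operator between complex normed spaces:
the distance from `T` to the set of operators of rank at most `n`.  For operators between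
Hilbert spaces this is precisely the `n`-th singular value of `T`. -/
noncomputable def approxNum {H K : Type*} [NormedAddCommGroup H] [NormedSpace ℂ H]
    [NormedAddCommGroup K] [NormedSpace ℂ K] (T : H →L[ℂ] K) (n : ℕ) : ℝ :=
  sInf {c : ℝ | ∃ F : H →L[ℂ] K, Module.rank ℂ (LinearMap.range (F : H →ₗ[ℂ] K)) ≤ n ∧ c = ‖T - F‖}

/-- Membership in the Schatten–von Neumann class `𝓛^p`: the singular value sequence
(= the sequence of approximation numbers) is `p`-summable. -/
def MemSchatten {H K : Type*} [NormedAddCommGroup H] [NormedSpace ℂ H]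
    [NormedAddCommGroup K] [NormedSpace ℂ K] (p : ℝ) (T : H →L[ℂ] K) : Prop :=
  Summable fun n => approxNum T n ^ p

/-- Membership in `𝓛^p` for an extended real exponent `p`, where `𝓛^∞` is interpreted as
the class of compact operators. -/
def MemSchattenE {H K : Type*} [NormedAddCommGroup H] [NormedSpace ℂ H]
    [NormedAddCommGroup K] [NormedSpace ℂ K] (p : ℝ≥0∞) (T : H →L[ℂ] K) : Prop :=
  if p = ∞ then IsCompactOperator T else MemSchatten p.toReal T

/-- The orthogonal projection onto a closed subspace `M`, as an operator `H →L[ℂ] H`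
(junk value `0` if `M` is not closed). -/
noncomputable def orthProjCLM {H : Type*} [NormedAddCommGroup H] [InnerProductSpace ℂ H]
    [CompleteSpace H] (M : Submodule ℂ H) : H →L[ℂ] H :=
  open scoped Classical in
  if h : IsClosed (M : Set H) then
    haveI : CompleteSpace M := h.completeSpace_coe
    M.subtypeL.comp M.orthogonalProjectionOnto
  else 0

/-- `‖z^n‖²` in the Drury–Arveson space `H²(ℂ^d)`: `n₁!⋯n_d!/(n₁+⋯+n_d)!`. -/
def daWeight {d : ℕ} (n : Fin d → ℕ) : ℝ :=
  ((∏ i, (n i).factorial : ℕ) : ℝ) / (((∑ i, n i).factorial : ℕ) : ℝ)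

/-- An abstract presentation of the `d`-shift `(S₁,…,S_d)` acting on `H²(ℂ^d) ⊗ E`
(the symmetric Fock space / Drury–Arveson space with coefficients in `E`).
`mono n` sends `ζ : E` to the monomial `z^n ⊗ ζ`; the axioms say that the monomials are
mutually orthogonal with `⟪z^n ⊗ ζ, z^n ⊗ η⟫ = (n₁!⋯n_d!/(n₁+⋯+n_d)!)·⟪ζ, η⟫`, that
they span a dense subspace, and that `S_k (z^n ⊗ ζ) = z^{n+e_k} ⊗ ζ`.  These axioms
determine the `d`-shift of rank `dim E` uniquely up to unitary equivalence. -/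
structure DShift (d : ℕ) (E : Type*) [NormedAddCommGroup E] [InnerProductSpace ℂ E]
    (H : Type*) [NormedAddCommGroup H] [InnerProductSpace ℂ H] where
  mono : (Fin d → ℕ) → E →ₗ[ℂ] H
  S : Fin d → H →L[ℂ] H
  inner_mono : ∀ (n m : Fin d → ℕ) (ζ η : E),
    (inner ℂ (mono n ζ) (mono m η) : ℂ) =
      if n = m then (daWeight n : ℂ) * (inner ℂ ζ η : ℂ) else 0
  total : (Submodule.span ℂ {x : H | ∃ n ζ, x = mono n ζ}).topologicalClosure = ⊤
  shift_mono : ∀ (k : Fin d) (n : Fin d → ℕ) (ζ : E),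
    S k (mono n ζ) = mono (fun i => if i = k then n i + 1 else n i) ζ

variable {d : ℕ} {E : Type*} [NormedAddCommGroup E] [InnerProductSpace ℂ E]
  {H₀ : Type*} [NormedAddCommGroup H₀] [InnerProductSpace ℂ H₀]

/-- `M` is invariant under each of the operators `S₁,…,S_d`. -/
def IsInvariant (D : DShift d E H₀) (M : Submodule ℂ H₀) : Prop :=
  ∀ k : Fin d, ∀ x ∈ M, D.S k x ∈ M

/-- `M` is a closed invariant subspace for the `d`-shift which is generated, as a closed
invariant subspace, by a set `F` of monomials `z^n ⊗ ζ`: that is, `M` is the smallest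
closed invariant subspace containing `F`. -/
def IsMonomialGenerated (D : DShift d E H₀) (M : Submodule ℂ H₀) : Prop :=
  IsClosed (M : Set H₀) ∧ IsInvariant D M ∧
    ∃ F : Set H₀, (∀ f ∈ F, ∃ n ζ, f = D.mono n ζ) ∧ F ⊆ (M : Set H₀) ∧
      ∀ N : Submodule ℂ H₀, IsClosed (N : Set H₀) → IsInvariant D N →
        F ⊆ (N : Set H₀) → M ≤ N

open scoped InnerProductSpace

theorem approxNum_le_norm_sub {H K : Type*} [NormedAddCommGroup H] [NormedSpace ℂ H]
    [NormedAddCommGroup K] [NormedSpace ℂ K] (T F : H →L[ℂ] K) {n : ℕ}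
    (hF : Module.rank ℂ (LinearMap.range (F : H →ₗ[ℂ] K)) ≤ n) : approxNum T n ≤ ‖T - F‖ := by
  apply csInf_le
  · exact ⟨0, fun c ⟨G, _, hc⟩ => hc ▸ norm_nonneg _⟩
  · exact ⟨F, hF, rfl⟩

theorem approxNum_nonneg {H K : Type*} [NormedAddCommGroup H] [NormedSpace ℂ H]
    [NormedAddCommGroup K] [NormedSpace ℂ K] (T : H →L[ℂ] K) (n : ℕ) :
    0 ≤ approxNum T n := by
  apply le_csInf
  · refine ⟨‖T - 0‖, 0, ?_, rfl⟩
    have h0 : LinearMap.range ((0 : H →L[ℂ] K) : H →ₗ[ℂ] K) ≤ ⊥ := by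
      rintro x ⟨y, rfl⟩; simp
    calc Module.rank ℂ (LinearMap.range ((0 : H →L[ℂ] K) : H →ₗ[ℂ] K))
        ≤ Module.rank ℂ (⊥ : Submodule ℂ K) := Submodule.rank_mono h0
      _ = 0 := rank_bot ℂ K
      _ ≤ n := by exact_mod_cast Nat.cast_le.mpr (Nat.zero_le n)
  · rintro c ⟨G, _, hc⟩
    exact hc ▸ norm_nonneg _

theorem daWeight_pos {d : ℕ} (n : Fin d → ℕ) : 0 < daWeight n := by
  apply div_pos <;> · exact_mod_cast Nat.pos_of_ne_zero (by positivity)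

/-- The eigenvalue `(n_{k₀}+1)/(|n|+1)` of `S_{k₀}* S_{k₀}` on the monomial `z^n ⊗ ζ`. -/
def lamDA {d : ℕ} (k0 : Fin d) (n : Fin d → ℕ) : ℝ :=
  ((n k0 : ℝ) + 1) / (((∑ i, n i : ℕ) : ℝ) + 1)

theorem lamDA_nonneg {d : ℕ} (k0 : Fin d) (n : Fin d → ℕ) : 0 ≤ lamDA k0 n := by
  unfold lamDA; positivity

theorem daWeight_succ {d : ℕ} (k0 : Fin d) (n : Fin d → ℕ) :
    daWeight (fun i => if i = k0 then n i + 1 else n i) = lamDA k0 n * daWeight n := by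
  have hcompl : ∀ f : Fin d → ℕ,
      (∏ i, (if i = k0 then f i + 1 else f i).factorial)
        = (f k0 + 1).factorial * ∏ i ∈ ({k0}ᶜ : Finset (Fin d)), (f i).factorial := by
    intro f
    rw [Fintype.prod_eq_mul_prod_compl k0 (fun i => (if i = k0 then f i + 1 else f i).factorial)]
    simp only [if_pos rfl]
    congr 1
    apply Finset.prod_congr rfl
    intro i hi
    rw [if_neg (by simpa using hi)]
  have hprod : ((∏ i, (if i = k0 then n i + 1 else n i).factorial) : ℕ)
      = (n k0 + 1) * ∏ i, (n i).factorial := by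
    rw [hcompl, Fintype.prod_eq_mul_prod_compl k0 (fun i => (n i).factorial),
      Nat.factorial_succ]
    ring
  have hsum : (∑ i, (if i = k0 then n i + 1 else n i)) = (∑ i, n i) + 1 := by
    rw [Fintype.sum_eq_add_sum_compl k0 (fun i => (if i = k0 then n i + 1 else n i)),
      Fintype.sum_eq_add_sum_compl k0 n, if_pos rfl]
    have : ∀ i ∈ ({k0}ᶜ : Finset (Fin d)), (if i = k0 then n i + 1 else n i) = n i := by
      intro i hi; rw [if_neg (by simpa using hi)]
    rw [Finset.sum_congr rfl this]
    ring
  unfold daWeight lamDA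
  rw [hprod, hsum, Nat.factorial_succ]
  have h1 : ((∑ i, n i).factorial : ℝ) ≠ 0 := Nat.cast_ne_zero.mpr (Nat.factorial_ne_zero _)
  have h2 : ((∑ i, n i : ℕ) : ℝ) + 1 ≠ 0 := by positivity
  push_cast
  field_simp

/-- Key estimate: the `k`-th approximation number of a compression `P_K A P_K` of a
self-adjoint operator which is diagonal with respect to a Hilbert basis of `K` is bounded
by any bound for the eigenvalues outside a set of `≤ k` indices. -/
theorem approxNum_compression_le {H : Type*} [NormedAddCommGroup H] [InnerProductSpace ℂ H]
    [CompleteSpace H]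
    (K : Submodule ℂ H) (hKc : IsClosed (K : Set H))
    (A : H →L[ℂ] H) (hA : ContinuousLinearMap.adjoint A = A)
    {ι : Type*} [DecidableEq ι] (b : HilbertBasis ι ℂ K) (lam : ι → ℝ)
    (heig : ∀ j, A (b j : H) = ((lam j : ℝ) : ℂ) • (b j : H))
    (S : Finset ι) {ε : ℝ} (hε : 0 ≤ ε) (hS : ∀ j, j ∉ S → |lam j| ≤ ε)
    {k : ℕ} (hk : S.card ≤ k) :
    approxNum (orthProjCLM K * A * orthProjCLM K) k ≤ ε := by
  haveI : CompleteSpace K := hKc.completeSpace_coe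
  set P : H →L[ℂ] H := orthProjCLM K with hPdef
  have hPap : ∀ x, P x = (K.orthogonalProjectionOnto x : H) := by
    intro x
    rw [hPdef, orthProjCLM, dif_pos hKc]
    rfl
  have hPmem : ∀ x, P x ∈ K := fun x => by rw [hPap]; exact (K.orthogonalProjectionOnto x).2
  have hPK : ∀ x, x ∈ K → P x = x := by
    intro x hx; rw [hPap]; exact Submodule.starProjection_eq_self_iff.mpr hx
  have hPsa : ∀ x y, ⟪P x, y⟫_ℂ = ⟪x, P y⟫_ℂ := by
    intro x y; rw [hPap, hPap]; exact Submodule.inner_starProjection_left_eq_right K x y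
  have hPnorm : ∀ x, ‖P x‖ ≤ ‖x‖ := by
    intro x
    rw [hPap]
    calc ‖(K.orthogonalProjectionOnto x : H)‖ = ‖K.orthogonalProjectionOnto x‖ := rfl
      _ ≤ ‖K.orthogonalProjectionOnto‖ * ‖x‖ := (K.orthogonalProjectionOnto).le_opNorm x
      _ ≤ 1 * ‖x‖ := by
          exact mul_le_mul_of_nonneg_right (Submodule.orthogonalProjectionOnto_norm_le K) (norm_nonneg x)
      _ = ‖x‖ := one_mul _
  classical
  set F : H →L[ℂ] H :=
    ∑ j ∈ S, ((lam j : ℝ) : ℂ) • ((innerSL ℂ ((b j : K) : H)).smulRight ((b j : K) : H)) with hFdef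
  have hFapply : ∀ x, F x = ∑ j ∈ S, (((lam j : ℝ) : ℂ) * ⟪((b j : K) : H), x⟫_ℂ) • ((b j : K) : H) := by
    intro x
    rw [hFdef]
    simp only [ContinuousLinearMap.sum_apply, ContinuousLinearMap.smul_apply,
      ContinuousLinearMap.smulRight_apply, innerSL_apply_apply]
    refine Finset.sum_congr rfl fun j _ => ?_
    rw [smul_smul]
  have hrank : Module.rank ℂ (LinearMap.range (F : H →ₗ[ℂ] H)) ≤ (k : Cardinal) := by
    have hle : LinearMap.range (F : H →ₗ[ℂ] H) ≤ Submodule.span ℂ ((S.image (fun j => ((b j : K) : H)) : Finset H) : Set H) := by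
      rintro _ ⟨x, rfl⟩
      rw [ContinuousLinearMap.coe_coe, hFapply]
      refine Submodule.sum_mem _ fun j hj => Submodule.smul_mem _ _ (Submodule.subset_span ?_)
      simp only [Finset.coe_image, Set.mem_image]
      exact ⟨j, by simpa using hj, rfl⟩
    calc Module.rank ℂ (LinearMap.range (F : H →ₗ[ℂ] H))
        ≤ Module.rank ℂ (Submodule.span ℂ ((S.image (fun j => ((b j : K) : H)) : Finset H) : Set H)) :=
          Submodule.rank_mono hle
      _ ≤ ((S.image (fun j => ((b j : K) : H))).card : Cardinal) := rank_span_finset_le _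
      _ ≤ (S.card : Cardinal) := by exact_mod_cast Finset.card_image_le
      _ ≤ (k : Cardinal) := by exact_mod_cast hk
  refine le_trans (approxNum_le_norm_sub _ F hrank) ?_
  apply ContinuousLinearMap.opNorm_le_bound _ hε
  intro x
  -- reduce to z := P x
  have hsub : (P * A * P - F) x = (P * A * P - F) (P x) := by
    have h1 : P (P x) = P x := hPK _ (hPmem x)
    have h2 : ∀ j : ι, ⟪((b j : K) : H), P x⟫_ℂ = ⟪((b j : K) : H), x⟫_ℂ := by
      intro j
      rw [← hPsa, hPK _ (b j).2]
    simp only [ContinuousLinearMap.sub_apply, ContinuousLinearMap.mul_apply, h1, hFapply, h2]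
  rw [hsub]
  set z : H := P x with hz
  have hzK : z ∈ K := hPmem x
  set z' : K := ⟨z, hzK⟩ with hz'
  -- the vector (P*A*P - F) z lies in K
  have hTz : (P * A * P) z = P (A z) := by
    simp only [ContinuousLinearMap.mul_apply]
    rw [hPK z hzK]
  have hyK : (P * A * P - F) z ∈ K := by
    rw [ContinuousLinearMap.sub_apply, hTz]
    refine sub_mem (hPmem _) ?_
    rw [hFapply]
    exact Submodule.sum_mem _ fun j _ => Submodule.smul_mem _ _ (b j).2
  set y : K := ⟨(P * A * P - F) z, hyK⟩ with hy
  -- coefficients of y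
  have hbc : ∀ i : ι, (b.repr y) i = ⟪((b i : K) : H), ((P * A * P - F) z)⟫_ℂ := by
    intro i
    rw [b.repr_apply_apply]
    rfl
  have hbz : ∀ i : ι, (b.repr z') i = ⟪((b i : K) : H), z⟫_ℂ := by
    intro i
    rw [b.repr_apply_apply]
    rfl
  have hAinner : ∀ v w : H, ⟪A v, w⟫_ℂ = ⟪v, A w⟫_ℂ := by
    intro v w
    conv_lhs => rw [← hA]
    exact ContinuousLinearMap.adjoint_inner_left A w v
  have honb : ∀ i j : ι, ⟪((b i : K) : H), ((b j : K) : H)⟫_ℂ = if i = j then 1 else 0 := by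
    intro i j
    have := orthonormal_iff_ite.mp b.orthonormal i j
    rwa [Submodule.coe_inner] at this
  have hcoef : ∀ i : ι, (b.repr y) i
      = if i ∈ S then 0 else ((lam i : ℝ) : ℂ) * (b.repr z') i := by
    intro i
    rw [hbc, hbz]
    have hTcoef : ⟪((b i : K) : H), (P * A * P) z⟫_ℂ = ((lam i : ℝ) : ℂ) * ⟪((b i : K) : H), z⟫_ℂ := by
      rw [hTz, ← hPsa, hPK _ (b i).2, ← hAinner, heig, inner_smul_left]
      rw [Complex.conj_ofReal]
    have hFcoef : ⟪((b i : K) : H), F z⟫_ℂ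
        = if i ∈ S then ((lam i : ℝ) : ℂ) * ⟪((b i : K) : H), z⟫_ℂ else 0 := by
      rw [hFapply, inner_sum]
      have : ∀ j ∈ S, ⟪((b i : K) : H), (((lam j : ℝ) : ℂ) * ⟪((b j : K) : H), z⟫_ℂ) • ((b j : K) : H)⟫_ℂ
          = if j = i then ((lam i : ℝ) : ℂ) * ⟪((b i : K) : H), z⟫_ℂ else 0 := by
        intro j _
        rw [inner_smul_right, honb]
        by_cases h : j = i
        · subst h; simp [if_pos rfl, eq_comm]
        · rw [if_neg h, if_neg (Ne.symm h), mul_zero]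
      rw [Finset.sum_congr rfl this, Finset.sum_ite_eq' S i]
    rw [ContinuousLinearMap.sub_apply, inner_sub_right, hTcoef, hFcoef]
    by_cases h : i ∈ S
    · rw [if_pos h, if_pos h, sub_self]
    · rw [if_neg h, if_neg h, sub_zero]
  -- norm estimate via lp
  have h2pos : (0:ℝ) < (2 : ℝ≥0∞).toReal := by norm_num
  have hynorm : ‖y‖ ≤ ε * ‖z'‖ := by
    rw [← b.repr.norm_map y, ← b.repr.norm_map z']
    apply lp.norm_le_of_tsum_le h2pos (mul_nonneg hε (norm_nonneg _))
    have hptw : ∀ i, ‖(b.repr y) i‖ ^ (2:ℝ≥0∞).toReal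
        ≤ ε ^ (2:ℝ≥0∞).toReal * ‖(b.repr z') i‖ ^ (2:ℝ≥0∞).toReal := by
      intro i
      rw [hcoef]
      by_cases h : i ∈ S
      · rw [if_pos h]
        simp only [norm_zero]
        rw [Real.zero_rpow (by norm_num)]
        positivity
      · rw [if_neg h]
        rw [norm_mul, ← Real.mul_rpow hε (norm_nonneg _)]
        apply Real.rpow_le_rpow (by positivity) ?_ (by norm_num)
        apply mul_le_mul_of_nonneg_right ?_ (norm_nonneg _)
        rw [Complex.norm_real]
        exact hS i h
    have hsummy : Summable fun i => ‖(b.repr y) i‖ ^ (2:ℝ≥0∞).toReal :=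
      (lp.memℓp (b.repr y)).summable h2pos
    have hsummz : Summable fun i => ε ^ (2:ℝ≥0∞).toReal * ‖(b.repr z') i‖ ^ (2:ℝ≥0∞).toReal :=
      ((lp.memℓp (b.repr z')).summable h2pos).mul_left _
    calc ∑' i, ‖(b.repr y) i‖ ^ (2:ℝ≥0∞).toReal
        ≤ ∑' i, ε ^ (2:ℝ≥0∞).toReal * ‖(b.repr z') i‖ ^ (2:ℝ≥0∞).toReal :=
          Summable.tsum_le_tsum hptw hsummy hsummz
      _ = ε ^ (2:ℝ≥0∞).toReal * ∑' i, ‖(b.repr z') i‖ ^ (2:ℝ≥0∞).toReal := tsum_mul_left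
      _ = ε ^ (2:ℝ≥0∞).toReal * ‖b.repr z'‖ ^ (2:ℝ≥0∞).toReal := by
          rw [lp.norm_rpow_eq_tsum h2pos]
      _ = (ε * ‖b.repr z'‖) ^ (2:ℝ≥0∞).toReal := by
          rw [Real.mul_rpow hε (norm_nonneg _)]
  have hyval : ‖(P * A * P - F) z‖ = ‖y‖ := rfl
  have hzval : ‖z'‖ = ‖z‖ := rfl
  calc ‖(P * A * P - F) z‖ = ‖y‖ := hyval
    _ ≤ ε * ‖z'‖ := hynorm
    _ = ε * ‖z‖ := by rw [hzval]
    _ ≤ ε * ‖x‖ := mul_le_mul_of_nonneg_left (hPnorm x) hε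


/-- Let `K ⊆ H²(ℂ^d) ⊗ ℂ^r` be the closed span of the monomials
`z^n ⊗ ζ` with `n₁ ≤ q`.  Then the restriction `B` of `S₁*` to `K` satisfies
`B* B ∈ 𝓛^p` for every `p > d`; equivalently, the compression `P_K S₁* S₁ P_K` belongs
to `𝓛^p` for every `p > d`. -/
theorem statement9 {H : Type*} [NormedAddCommGroup H] [InnerProductSpace ℂ H]
    [CompleteSpace H] (d r : ℕ) (hd : 0 < d) (hr : 0 < r)
    (D : DShift d (EuclideanSpace ℂ (Fin r)) H)
    (q : ℕ) (hq : 0 < q)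
    (K : Submodule ℂ H)
    (hK : K = (Submodule.span ℂ
      {x : H | ∃ n ζ, n ⟨0, hd⟩ ≤ q ∧ x = D.mono n ζ}).topologicalClosure)
    (p : ℝ) (hp : (d : ℝ) < p) :
    MemSchatten p (orthProjCLM K *
      (ContinuousLinearMap.adjoint (D.S ⟨0, hd⟩) * D.S ⟨0, hd⟩) * orthProjCLM K) := by
  classical
  set k0 : Fin d := ⟨0, hd⟩ with hk0
  set A : H →L[ℂ] H := ContinuousLinearMap.adjoint (D.S k0) * D.S k0 with hA
  have hAsa : ContinuousLinearMap.adjoint A = A := by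
    rw [hA, ← ContinuousLinearMap.star_eq_adjoint, ← ContinuousLinearMap.star_eq_adjoint,
      star_mul, star_star]
  have hKclosed : IsClosed (K : Set H) := by
    rw [hK]; exact Submodule.isClosed_topologicalClosure _
  haveI : CompleteSpace K := hKclosed.completeSpace_coe
  -- injectivity of the shift on multi-indices
  have hsucc_inj : ∀ n m : Fin d → ℕ,
      (fun i => if i = k0 then n i + 1 else n i) = (fun i => if i = k0 then m i + 1 else m i)
      → n = m := by
    intro n m h
    funext i
    have hi := congrFun h i
    by_cases hik : i = k0
    · rw [if_pos hik, if_pos hik] at hi; omega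
    · rwa [if_neg hik, if_neg hik] at hi
  -- the monomials are eigenvectors of A
  have heigmono : ∀ (n : Fin d → ℕ) (ζ : EuclideanSpace ℂ (Fin r)),
      A (D.mono n ζ) = ((lamDA k0 n : ℝ) : ℂ) • D.mono n ζ := by
    intro n ζ
    have hker : ∀ y : H, ⟪A (D.mono n ζ) - ((lamDA k0 n : ℝ) : ℂ) • D.mono n ζ, y⟫_ℂ = 0 := by
      set u0 : H := A (D.mono n ζ) - ((lamDA k0 n : ℝ) : ℂ) • D.mono n ζ with hu0
      have hNle : Submodule.span ℂ {x : H | ∃ n ζ, x = D.mono n ζ}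
          ≤ LinearMap.ker (innerSL ℂ u0 : H →ₗ[ℂ] ℂ) := by
        rw [Submodule.span_le]
        rintro _ ⟨m, η, rfl⟩
        simp only [SetLike.mem_coe, LinearMap.mem_ker]
        show ⟪u0, D.mono m η⟫_ℂ = 0
        rw [hu0, inner_sub_left, inner_smul_left]
        have h1 : ⟪A (D.mono n ζ), D.mono m η⟫_ℂ
            = ⟪D.S k0 (D.mono n ζ), D.S k0 (D.mono m η)⟫_ℂ := by
          rw [hA]
          show ⟪ContinuousLinearMap.adjoint (D.S k0) (D.S k0 (D.mono n ζ)), D.mono m η⟫_ℂ = _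
          rw [ContinuousLinearMap.adjoint_inner_left]
        rw [h1, D.shift_mono, D.shift_mono, D.inner_mono, D.inner_mono]
        by_cases hnm : n = m
        · subst hnm
          rw [if_pos rfl, if_pos rfl, daWeight_succ k0 n, Complex.conj_ofReal]
          push_cast
          ring
        · rw [if_neg (fun h => hnm (hsucc_inj _ _ h)), if_neg hnm, mul_zero, sub_zero]
      have hclosed : IsClosed ((LinearMap.ker (innerSL ℂ u0 : H →ₗ[ℂ] ℂ) : Submodule ℂ H) : Set H) :=
        ContinuousLinearMap.isClosed_ker (innerSL ℂ u0)
      have htop : (⊤ : Submodule ℂ H) ≤ LinearMap.ker (innerSL ℂ u0 : H →ₗ[ℂ] ℂ) := by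
        rw [← D.total]
        exact Submodule.topologicalClosure_minimal _ hNle hclosed
      intro y
      have hy := htop (Submodule.mem_top : y ∈ (⊤ : Submodule ℂ H))
      simpa using hy
    have h0 := hker (A (D.mono n ζ) - ((lamDA k0 n : ℝ) : ℂ) • D.mono n ζ)
    rw [inner_self_eq_zero, sub_eq_zero] at h0
    exact h0
  -- the orthonormal family
  set u : ({n : Fin d → ℕ // n k0 ≤ q} × Fin r) → H := fun j =>
    (((Real.sqrt (daWeight j.1.1))⁻¹ : ℝ) : ℂ) • D.mono j.1.1 (EuclideanSpace.single j.2 1)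
    with hu
  have honb : ∀ i j, ⟪u i, u j⟫_ℂ = if i = j then 1 else 0 := by
    intro i j
    rw [hu]
    simp only
    rw [inner_smul_left, inner_smul_right, D.inner_mono, Complex.conj_ofReal]
    by_cases h1 : i.1.1 = j.1.1
    · rw [if_pos h1]
      by_cases h2 : i = j
      · subst h2
        rw [if_pos rfl]
        rw [EuclideanSpace.inner_single_left, EuclideanSpace.single_apply, if_pos rfl]
        have hw : 0 < Real.sqrt (daWeight i.1.1) := Real.sqrt_pos.mpr (daWeight_pos _)
        have hw2 : Real.sqrt (daWeight i.1.1) * Real.sqrt (daWeight i.1.1) = daWeight i.1.1 :=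
          Real.mul_self_sqrt (daWeight_pos _).le
        rw [map_one, mul_one]
        push_cast
        rw [← hw2]
        have hne : ((Real.sqrt (daWeight i.1.1) : ℝ) : ℂ) ≠ 0 := by exact_mod_cast hw.ne'
        field_simp
        rw [Real.sqrt_sq hw.le, Complex.ofReal_pow, div_self (pow_ne_zero 2 hne)]
      · have hsnd : i.2 ≠ j.2 := by
          intro hs
          exact h2 (Prod.ext (Subtype.ext h1) hs)
        rw [if_neg h2, EuclideanSpace.inner_single_left, EuclideanSpace.single_apply,
          if_neg hsnd]
        simp
    · rw [if_neg h1, if_neg (fun h => h1 (congrArg (fun t => t.1.1) h))]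
      simp
  have humem : ∀ j, u j ∈ K := by
    intro j
    rw [hK, hu]
    exact Submodule.smul_mem _ _ (Submodule.le_topologicalClosure _
      (Submodule.subset_span ⟨j.1.1, EuclideanSpace.single j.2 1, j.1.2, rfl⟩))
  have hspan : Submodule.span ℂ (Set.range u)
      = Submodule.span ℂ {x : H | ∃ n ζ, n k0 ≤ q ∧ x = D.mono n ζ} := by
    apply le_antisymm
    · rw [Submodule.span_le]
      rintro _ ⟨j, rfl⟩
      rw [hu]
      exact Submodule.smul_mem _ _
        (Submodule.subset_span ⟨j.1.1, EuclideanSpace.single j.2 1, j.1.2, rfl⟩)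
    · rw [Submodule.span_le]
      rintro _ ⟨n, ζ, hn, rfl⟩
      have hζ : ζ = ∑ i, ζ i • EuclideanSpace.single i (1 : ℂ) := by
        have hsr := (EuclideanSpace.basisFun (Fin r) ℂ).sum_repr ζ
        simp only [EuclideanSpace.basisFun_apply, EuclideanSpace.basisFun_repr] at hsr
        exact hsr.symm
      rw [hζ, map_sum]
      apply Submodule.sum_mem
      intro i _
      rw [map_smul]
      have hwne : ((Real.sqrt (daWeight n) : ℝ) : ℂ) ≠ 0 := by
        exact_mod_cast (Real.sqrt_pos.mpr (daWeight_pos n)).ne'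
      have hmu : D.mono n (EuclideanSpace.single i 1)
          = ((Real.sqrt (daWeight n) : ℝ) : ℂ) • u (⟨n, hn⟩, i) := by
        rw [hu]
        simp only
        rw [smul_smul, Complex.ofReal_inv, mul_inv_cancel₀ hwne, one_smul]
      rw [hmu]
      exact Submodule.smul_mem _ _ (Submodule.smul_mem _ _
        (Submodule.subset_span ⟨(⟨n, hn⟩, i), rfl⟩))
  set u' : ({n : Fin d → ℕ // n k0 ≤ q} × Fin r) → K := fun j => (⟨u j, humem j⟩ : K) with hu'
  have honb' : Orthonormal ℂ u' := by
    rw [orthonormal_iff_ite]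
    intro i j
    rw [Submodule.coe_inner]
    exact honb i j
  have hdense : ⊤ ≤ (Submodule.span ℂ (Set.range u')).topologicalClosure := by
    rintro ⟨xv, hxv⟩ _
    rw [← SetLike.mem_coe, Submodule.topologicalClosure_coe, closure_subtype]
    have himg : ((K.subtype : K → H) '' ((Submodule.span ℂ (Set.range u') : Submodule ℂ K) : Set K))
        = ((Submodule.span ℂ (Set.range u) : Submodule ℂ H) : Set H) := by
      rw [← Submodule.map_coe K.subtype, Submodule.map_span, ← Set.range_comp]
      rfl
    show xv ∈ closure
      ((K.subtype : K → H) '' ((Submodule.span ℂ (Set.range u') : Submodule ℂ K) : Set K))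
    rw [himg, hspan]
    rw [hK] at hxv
    rw [← SetLike.mem_coe, Submodule.topologicalClosure_coe] at hxv
    exact hxv
  set b : HilbertBasis ({n : Fin d → ℕ // n k0 ≤ q} × Fin r) ℂ K :=
    HilbertBasis.mk honb' hdense with hb
  have hbcoe : ∀ j, ((b j : K) : H) = u j := by
    intro j
    rw [hb, HilbertBasis.coe_mk]
  set lam : ({n : Fin d → ℕ // n k0 ≤ q} × Fin r) → ℝ := fun j => lamDA k0 j.1.1 with hlam
  have heig : ∀ j, A ((b j : K) : H) = ((lam j : ℝ) : ℂ) • ((b j : K) : H) := by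
    intro j
    rw [hbcoe, hu]
    simp only
    rw [map_smul, heigmono, hlam, smul_comm]
  -- finiteness of the index sets
  have hfin : ∀ N : ℕ,
      {j : {n : Fin d → ℕ // n k0 ≤ q} × Fin r | (∑ i, j.1.1 i) < N}.Finite := by
    intro N
    have h1 : {n : Fin d → ℕ | (∑ i, n i) < N}.Finite := by
      apply Set.Finite.subset (Set.Finite.pi (fun _ : Fin d => Set.finite_Iio N))
      intro n hn
      simp only [Set.mem_pi, Set.mem_univ, Set.mem_Iio, forall_true_left]
      intro i
      calc n i ≤ ∑ i, n i := Finset.single_le_sum (fun _ _ => Nat.zero_le _) (Finset.mem_univ i)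
        _ < N := hn
    have h2 : ({m : (Fin d → ℕ) × Fin r | (∑ i, m.1 i) < N}).Finite := by
      apply Set.Finite.subset (h1.prod Set.finite_univ)
      intro m hm
      exact ⟨hm, trivial⟩
    apply Set.Finite.preimage (f := fun j : {n : Fin d → ℕ // n k0 ≤ q} × Fin r => (j.1.1, j.2))
      ?_ h2
    intro a _ b _ hab
    simp only [Prod.mk.injEq] at hab
    exact Prod.ext (Subtype.ext hab.1) hab.2
  have hcard : ∀ N : ℕ, (hfin N).toFinset.card ≤ r * N ^ d := by
    intro N
    rcases Nat.eq_zero_or_pos N with hN0 | hN0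
    · subst hN0
      have : (hfin 0).toFinset = ∅ := by
        apply Finset.eq_empty_of_forall_notMem
        intro j hj
        exact Nat.not_lt_zero _ ((hfin 0).mem_toFinset.mp hj)
      rw [this]
      simp
    · have hinj : (hfin N).toFinset.card ≤ Fintype.card ((Fin d → Fin N) × Fin r) := by
        apply Finset.card_le_card_of_injOn
          (fun j => ((fun i => (⟨min (j.1.1 i) (N-1), by omega⟩ : Fin N)), j.2))
          (fun a _ => Finset.mem_univ _)
        intro a ha b hb hab
        simp only [Prod.mk.injEq] at hab
        rw [Set.Finite.coe_toFinset] at ha hb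
        have hsa : ∀ i, a.1.1 i < N := fun i =>
          lt_of_le_of_lt (Finset.single_le_sum (fun _ _ => Nat.zero_le _) (Finset.mem_univ i)) ha
        have hsb : ∀ i, b.1.1 i < N := fun i =>
          lt_of_le_of_lt (Finset.single_le_sum (fun _ _ => Nat.zero_le _) (Finset.mem_univ i)) hb
        have h1 : ∀ i, a.1.1 i = b.1.1 i := by
          intro i
          have h2 := Fin.mk.inj_iff.mp (congrFun hab.1 i)
          have ha' := hsa i
          have hb' := hsb i
          omega
        exact Prod.ext (Subtype.ext (funext h1)) hab.2
      calc (hfin N).toFinset.card ≤ Fintype.card ((Fin d → Fin N) × Fin r) := hinj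
        _ = N ^ d * r := by simp [Fintype.card_prod, Fintype.card_fun]
        _ = r * N ^ d := Nat.mul_comm _ _
  -- the main approximation-number bound
  have hbound : ∀ (N k : ℕ), r * N ^ d ≤ k →
      approxNum (orthProjCLM K * A * orthProjCLM K) k ≤ ((q : ℝ) + 1) / ((N : ℝ) + 1) := by
    intro N k hkN
    apply approxNum_compression_le K hKclosed A hAsa b lam heig ((hfin N).toFinset)
      (by positivity)
    · intro j hj
      have hjN : N ≤ ∑ i, j.1.1 i := by
        by_contra hcon
        push_neg at hcon
        exact hj ((hfin N).mem_toFinset.mpr hcon)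
      rw [hlam]
      simp only
      rw [abs_of_nonneg (lamDA_nonneg _ _)]
      unfold lamDA
      apply div_le_div₀ (by positivity)
      · have h : ((j.1.1 k0 : ℕ) : ℝ) ≤ (q : ℝ) := Nat.cast_le.mpr j.1.2
        linarith
      · positivity
      · have h : ((N : ℕ) : ℝ) ≤ ((∑ i, j.1.1 i : ℕ) : ℝ) := Nat.cast_le.mpr hjN
        linarith
    · exact le_trans (hcard N) hkN
  -- final summability
  have hd0 : ((d : ℝ)) ≠ 0 := by positivity
  have hppos : (0:ℝ) < p := lt_of_le_of_lt (by exact_mod_cast Nat.zero_le d) hp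
  have hpd : 1 < p / (d : ℝ) := (one_lt_div (by positivity)).mpr hp
  set C0 : ℝ := ((q : ℝ) + 1) * (r : ℝ) ^ (1 / (d : ℝ)) with hC0
  have hC0pos : 0 < C0 := by
    rw [hC0]
    have : (0:ℝ) < (r : ℝ) ^ (1 / (d : ℝ)) := Real.rpow_pos_of_pos (by exact_mod_cast hr) _
    positivity
  set T : H →L[ℂ] H := orthProjCLM K * A * orthProjCLM K with hT
  have hptw : ∀ k : ℕ, 1 ≤ k →
      approxNum T k ^ p ≤ C0 ^ p * (1 / ((k : ℝ) ^ (p / (d : ℝ)))) := by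
    intro k hk1
    have hkpos : (0:ℝ) < (k : ℝ) := by exact_mod_cast hk1
    set a : ℝ := ((k : ℝ) / (r : ℝ)) ^ (1 / (d : ℝ)) with ha
    have hkr : (0:ℝ) < (k : ℝ) / (r : ℝ) := by
      apply div_pos hkpos (by exact_mod_cast hr)
    have hapos : 0 < a := Real.rpow_pos_of_pos hkr _
    set N : ℕ := ⌊a⌋₊ with hN
    have hNa : (N : ℝ) ≤ a := Nat.floor_le hapos.le
    have hrNd : r * N ^ d ≤ k := by
      have h1 : (N : ℝ) ^ (d : ℕ) ≤ (k : ℝ) / (r : ℝ) := by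
        calc (N : ℝ) ^ (d : ℕ) ≤ a ^ (d : ℕ) := pow_le_pow_left₀ (Nat.cast_nonneg N) hNa d
          _ = (k : ℝ) / (r : ℝ) := by
            rw [ha, ← Real.rpow_natCast (((k : ℝ) / (r : ℝ)) ^ (1 / (d : ℝ))) d,
              ← Real.rpow_mul hkr.le, one_div, inv_mul_cancel₀ hd0, Real.rpow_one]
      have h2 : ((r * N ^ d : ℕ) : ℝ) ≤ (k : ℝ) := by
        push_cast
        calc (r : ℝ) * (N : ℝ) ^ (d : ℕ) ≤ (r : ℝ) * ((k : ℝ) / (r : ℝ)) :=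
              mul_le_mul_of_nonneg_left h1 (Nat.cast_nonneg r)
          _ = (k : ℝ) := by
              field_simp
      exact_mod_cast h2
    have hb1 := hbound N k hrNd
    have haN : a < (N : ℝ) + 1 := Nat.lt_floor_add_one a
    have hb2 : ((q : ℝ) + 1) / ((N : ℝ) + 1) ≤ ((q : ℝ) + 1) / a :=
      div_le_div_of_nonneg_left (by positivity) hapos haN.le
    have hkrne : ((k : ℝ)) ^ (1 / (d : ℝ)) ≠ 0 := (Real.rpow_pos_of_pos hkpos _).ne'
    have hrrne : ((r : ℝ)) ^ (1 / (d : ℝ)) ≠ 0 :=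
      (Real.rpow_pos_of_pos (by exact_mod_cast hr) _).ne'
    have hb3 : ((q : ℝ) + 1) / a = C0 * (1 / ((k : ℝ) ^ (1 / (d : ℝ)))) := by
      rw [ha, Real.div_rpow (Nat.cast_nonneg k) (Nat.cast_nonneg r), hC0]
      field_simp
    have happrox : approxNum T k ≤ C0 * (1 / ((k : ℝ) ^ (1 / (d : ℝ)))) := by
      rw [← hb3]
      exact hb1.trans hb2
    calc approxNum T k ^ p ≤ (C0 * (1 / ((k : ℝ) ^ (1 / (d : ℝ))))) ^ p :=
          Real.rpow_le_rpow (approxNum_nonneg T k) happrox hppos.le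
      _ = C0 ^ p * (1 / ((k : ℝ) ^ (p / (d : ℝ)))) := by
          rw [Real.mul_rpow hC0pos.le (by positivity), Real.div_rpow (by norm_num)
            (Real.rpow_nonneg (Nat.cast_nonneg k) _), Real.one_rpow,
            ← Real.rpow_mul (Nat.cast_nonneg k)]
          rw [one_div, show (1 / (d:ℝ)) * p = p / (d:ℝ) by ring, one_div]
  have hsum : Summable (fun k : ℕ => C0 ^ p * (1 / (((k : ℝ) + 1) ^ (p / (d : ℝ))))) := by
    have h0 : Summable (fun n : ℕ => 1 / ((n : ℝ)) ^ (p / (d : ℝ))) :=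
      Real.summable_one_div_nat_rpow.mpr hpd
    have h1 : Summable (fun n : ℕ => 1 / (((n + 1 : ℕ) : ℝ)) ^ (p / (d : ℝ))) :=
      (summable_nat_add_iff 1).mpr h0
    have h2 : Summable (fun n : ℕ => 1 / (((n : ℝ) + 1)) ^ (p / (d : ℝ))) := by
      apply h1.congr
      intro n
      push_cast
      rfl
    exact h2.mul_left _
  rw [MemSchatten, ← summable_nat_add_iff 1]
  apply Summable.of_nonneg_of_le
    (fun k => Real.rpow_nonneg (approxNum_nonneg _ _) p) ?_ hsum
  intro k
  have hin := hptw (k + 1) (by omega)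
  have hc : (((k + 1 : ℕ)) : ℝ) = (k : ℝ) + 1 := by push_cast; rfl
  rw [hc] at hin
  exact hin


end Arveson
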